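/- Let G = H × K be a transitive permutation group on a finite set Ω where H is a p-group and K has order coprime to p, let α ∈ Ω, and let Σ = α^H be the H-orbit of α. Then a subset Δ ⊆ Σ containing α is a G-block if and only if it is an H-block for the transitive action of H on Σ. -/
import Mathlib


open Pointwise

namespace GaloisBlocks

variable {Ω : Type*}

/-- `G ≤ Sym(Ω)` is transitive on `Ω`. -/
def IsTransitive (G : Subgroup (Equiv.Perm Ω)) : Prop :=
  ∀ a b : Ω, ∃ g ∈ G, g a = b

/-- `Δ` is a `G`-block: every `G`-translate of `Δ` equals `Δ` or is disjoint from it. -/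
def IsBlock (G : Subgroup (Equiv.Perm Ω)) (Δ : Set Ω) : Prop :=
  ∀ g ∈ G, g • Δ = Δ ∨ Disjoint (g • Δ) Δ

/-- The setwise stabilizer `G_Δ` of `Δ` in `G`. -/
def stab (G : Subgroup (Equiv.Perm Ω)) (Δ : Set Ω) : Subgroup (Equiv.Perm Ω) :=
  G ⊓ MulAction.stabilizer (Equiv.Perm Ω) Δ

/-- The point stabilizer `G_α`. -/
def stabPt (G : Subgroup (Equiv.Perm Ω)) (α : Ω) : Subgroup (Equiv.Perm Ω) :=
  G ⊓ MulAction.stabilizer (Equiv.Perm Ω) α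

/-- The `Δ`-block system of `S`: all `G`-translates of `Δ` contained in `S`. -/
def blockSystem (G : Subgroup (Equiv.Perm Ω)) (S Δ : Set Ω) : Set (Set Ω) :=
  {Υ | (∃ g ∈ G, Υ = g • Δ) ∧ Υ ⊆ S}

/-- `G(S/Δ)`: elements of `G_S` fixing setwise every block of the `Δ`-block
system of `S`. -/
def blockKer (G : Subgroup (Equiv.Perm Ω)) (S Δ : Set Ω) : Subgroup (Equiv.Perm Ω) :=
  stab G S ⊓ ⨅ Υ ∈ blockSystem G S Δ, MulAction.stabilizer (Equiv.Perm Ω) Υ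

/-- `G^Δ = G(Ω/Δ)`: the kernel of the action of `G` on the block system of `Δ`. -/
def fullKer (G : Subgroup (Equiv.Perm Ω)) (Δ : Set Ω) : Subgroup (Equiv.Perm Ω) :=
  blockKer G Set.univ Δ

/-- The orbit `α^N`. -/
def orbitOf (N : Subgroup (Equiv.Perm Ω)) (α : Ω) : Set Ω :=
  {β | ∃ g ∈ N, g α = β}

/-- `G` is primitive: transitive with only trivial blocks. -/
def IsPrimitive (G : Subgroup (Equiv.Perm Ω)) : Prop :=
  IsTransitive G ∧ ∀ Δ : Set Ω, IsBlock G Δ → Δ.Subsingleton ∨ Δ = Set.univ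

/-- `Δ` is a maximal `G`-subblock of `S`. -/
def IsMaximalSubblock (G : Subgroup (Equiv.Perm Ω)) (Δ S : Set Ω) : Prop :=
  IsBlock G Δ ∧ IsBlock G S ∧ Δ ⊂ S ∧
    ∀ Υ : Set Ω, IsBlock G Υ → ¬(Δ ⊂ Υ ∧ Υ ⊂ S)

/-- `P` is a `p`-Sylow subgroup of `G`. -/
def IsSylowOf (p : ℕ) (P G : Subgroup (Equiv.Perm Ω)) : Prop :=
  P ≤ G ∧ IsPGroup p ↥P ∧
    ∀ Q : Subgroup (Equiv.Perm Ω), Q ≤ G → IsPGroup p ↥Q → P ≤ Q → Q = P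

/-- If `G = H × K` (internally) with `H` a `p`-group and `p ∤ #K`, and
`Σ = α^H`, then a subset `Δ ⊆ Σ` containing `α` is a `G`-block iff it is an
`H`-block. -/
theorem stmt12 [Fintype Ω] (G H K : Subgroup (Equiv.Perm Ω)) (p : ℕ)
    (hp : p.Prime) (hG : IsTransitive G) (hHG : H ≤ G) (hKG : K ≤ G)
    (hcomm : ∀ h ∈ H, ∀ k ∈ K, Commute h k) (hinf : H ⊓ K = ⊥)
    (hsup : H ⊔ K = G) (hHp : IsPGroup p ↥H) (hK : ¬ p ∣ Nat.card ↥K)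
    (α : Ω) (Δ : Set Ω) (hΔsub : Δ ⊆ orbitOf H α) (hα : α ∈ Δ) :
    IsBlock G Δ ↔ IsBlock H Δ := by

  have key : ∀ g ∈ G, ∃ h ∈ H, ∃ k ∈ K, g = h * k := by
    intro g hg
    rw [← hsup, Subgroup.sup_eq_closure] at hg
    induction hg using Subgroup.closure_induction with
    | mem x hx =>
      rcases hx with hx | hx
      · exact ⟨x, hx, 1, one_mem K, (mul_one x).symm⟩
      · exact ⟨1, one_mem H, x, hx, (one_mul x).symm⟩
    | one => exact ⟨1, one_mem H, 1, one_mem K, (one_mul 1).symm⟩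
    | mul x y _ _ ihx ihy =>
      obtain ⟨h1, hh1, k1, hk1, rfl⟩ := ihx
      obtain ⟨h2, hh2, k2, hk2, rfl⟩ := ihy
      exact ⟨h1 * h2, mul_mem hh1 hh2, k1 * k2, mul_mem hk1 hk2, by
        rw [mul_assoc, mul_assoc, ← mul_assoc k1, (hcomm h2 hh2 k1 hk1).symm.eq,
          mul_assoc]⟩
    | inv x _ ihx =>
      obtain ⟨h1, hh1, k1, hk1, rfl⟩ := ihx
      exact ⟨h1⁻¹, inv_mem hh1, k1⁻¹, inv_mem hk1, by
        rw [mul_inv_rev, ((hcomm h1 hh1 k1 hk1).inv_inv).eq]⟩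
  -- a commuting rule applied pointwise
  have comm_apply : ∀ h ∈ H, ∀ k ∈ K, ∀ x : Ω, k (h x) = h (k x) := by
    intro h hh k hk x
    have := (hcomm h hh k hk).symm.eq
    calc k (h x) = (k * h) x := rfl
    _ = (h * k) x := by rw [this]
    _ = h (k x) := rfl
  -- key: if k ∈ K moves α inside Σ = α^H, then k fixes Σ pointwise
  have kfix : ∀ k ∈ K, k α ∈ orbitOf H α → ∀ β ∈ orbitOf H α, k β = β := by
    intro k hk hkα
    have hkαα : k α = α := by
      obtain ⟨h₀, hh₀, hh₀α⟩ := hkα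
      obtain ⟨n, hn⟩ := hHp ⟨h₀, hh₀⟩
      have hn' : h₀ ^ (p ^ n) = 1 := by
        have := congrArg (Subgroup.subtype H) hn
        simpa using this
      -- c := h₀⁻¹ * k fixes α
      have hcα : (h₀⁻¹ * k) α = α := by
        show h₀⁻¹ (k α) = α
        rw [← hh₀α]
        exact Equiv.Perm.inv_eq_iff_eq.mpr rfl
      have hcpow : ∀ m : ℕ, ((h₀⁻¹ * k) ^ m) α = α := by
        intro m
        induction m with
        | zero => rfl
        | succ m ih =>
          have : (h₀⁻¹ * k) ^ (m + 1) = ((h₀⁻¹ * k) ^ m) * (h₀⁻¹ * k) := pow_succ _ _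
          rw [this]
          show ((h₀⁻¹ * k) ^ m) ((h₀⁻¹ * k) α) = α
          rw [hcα]; exact ih
      have hcomm₀ : Commute h₀⁻¹ k := (hcomm h₀ hh₀ k hk).inv_left
      have hpowk : (h₀⁻¹ * k) ^ (p ^ n) = k ^ (p ^ n) := by
        rw [hcomm₀.mul_pow, inv_pow, hn', inv_one, one_mul]
      have hkpowα : (k ^ (p ^ n)) α = α := by rw [← hpowk]; exact hcpow _
      -- coprimality: p ∤ orderOf k
      have hord : orderOf k ∣ Nat.card ↥K := by
        have : orderOf ((⟨k, hk⟩ : ↥K)) ∣ Nat.card ↥K := orderOf_dvd_natCard _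
        rwa [← orderOf_injective K.subtype K.subtype_injective ⟨k, hk⟩] at this
      have hpk : ¬ p ∣ orderOf k := fun hdvd => hK (hdvd.trans hord)
      have hcop : (p ^ n).Coprime (orderOf k) :=
        Nat.Coprime.pow_left _ ((hp.coprime_iff_not_dvd).mpr hpk)
      obtain ⟨m, hm⟩ := exists_pow_eq_self_of_coprime hcop
      have hfix : ∀ j : ℕ, ((k ^ (p ^ n)) ^ j) α = α := by
        intro j
        induction j with
        | zero => rfl
        | succ j ih =>
          rw [pow_succ]
          show ((k ^ (p ^ n)) ^ j) ((k ^ (p ^ n)) α) = α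
          rw [hkpowα]; exact ih
      rw [← hm]; exact hfix m
    intro β hβ
    obtain ⟨h, hh, rfl⟩ := hβ
    rw [comm_apply h hh k hk α, hkαα]
  constructor
  · intro hB h hh
    exact hB h (hHG hh)
  · intro hB g hg
    obtain ⟨h, hh, k, hk, rfl⟩ := key g hg
    by_cases hdis : Disjoint ((h * k) • Δ) Δ
    · exact Or.inr hdis
    left
    rw [Set.not_disjoint_iff] at hdis
    obtain ⟨x, hx1, hx2⟩ := hdis
    obtain ⟨δ, hδ, hδx⟩ := hx1
    obtain ⟨h₁, hh₁, rfl⟩ := hΔsub hδ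
    obtain ⟨h₂, hh₂, hh₂x⟩ := hΔsub hx2
    -- (h*k)(h₁ α) = h₂ α forces k α in Sigma
    have hkain : k α ∈ orbitOf H α := by
      refine ⟨h₁⁻¹ * h⁻¹ * h₂, mul_mem (mul_mem (inv_mem hh₁) (inv_mem hh)) hh₂, ?_⟩
      have e1 : (h * k) (h₁ α) = h (h₁ (k α)) := by
        show (h * k) (h₁ α) = h (h₁ (k α))
        have : k (h₁ α) = h₁ (k α) := comm_apply h₁ hh₁ k hk α
        calc (h * k) (h₁ α) = h (k (h₁ α)) := rfl
        _ = h (h₁ (k α)) := by rw [this]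
      have hδx' : (h * k) (h₁ α) = x := hδx
      have e2 : h (h₁ (k α)) = h₂ α := by rw [← e1, hδx', hh₂x]
      show (h₁⁻¹ * h⁻¹ * h₂ : Equiv.Perm Ω) α = k α
      simp only [Equiv.Perm.mul_apply]
      rw [← e2]
      simp
    have hkΔ : k • Δ = Δ := by
      ext x
      constructor
      · rintro ⟨y, hy, rfl⟩
        have := kfix k hk hkain y (hΔsub hy)
        show k y ∈ Δ
        rwa [this]
      · intro hx
        refine ⟨x, hx, ?_⟩
        exact kfix k hk hkain x (hΔsub hx)
    have : (h * k) • Δ = h • Δ := by rw [mul_smul, hkΔ]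
    rw [this]
    rcases hB h hh with heq | hd
    · exact heq
    · exact absurd hd (Set.not_disjoint_iff.mpr ⟨x, by
        rw [← this]; exact ⟨h₁ α, hδ, hδx⟩, hx2⟩)


end GaloisBlocks
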